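/- If a_i, b ∈ ℝ with 0 ≤ a_i and l_i ≥ 1 - 1/(1 + s) whenever s = sum_j d_{ij} a_j and a_j ≤ l_j for all j, then the sequence defined by a^{(0)} = δ > 0 and a^{(n+1)}_i = 1 - 1/(1 + sum_j d_{ij} a^{(n)}_j) is monotone nondecreasing and bounded above by 1, hence converges to a fixed point a* of the iteration with a*_i ≥ δ_i; if additionally the escape probabilities E_i satisfy the same fixed point equation and the fixed point in (0,1]^m is unique, then a*_i = E_i. -/

import Mathlib

/-- Consider the monotone map `Φ(a)_i = 1 - 1/(1 + ∑_j d_{ij} a_j)` and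
the sequence `a⁽⁰⁾ = δ > 0`, `a⁽ⁿ⁺¹⁾ = Φ(a⁽ⁿ⁾)` (with `δ ≤ Φ(δ)`, `δ ≤ E`). Then the
sequence is monotone nondecreasing and bounded above by `1`, hence converges to a
fixed point `a*` of the iteration with `a*_i ≥ δ_i`; if moreover the escape
probabilities `E_i` satisfy the same fixed point equation and the fixed point in
`(0,1]^m` is unique, then `a* = E`. -/
theorem stmt_17 (m : ℕ) (dmat : Fin m → Fin m → ℕ)
    (hd : ∀ i, 1 ≤ ∑ j, dmat i j)
    (Φ : (Fin m → ℝ) → (Fin m → ℝ))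
    (hΦ : ∀ a i, Φ a i = 1 - 1 / (1 + ∑ j, (dmat i j : ℝ) * a j))
    (δ E : Fin m → ℝ) (hδ : ∀ i, 0 < δ i) (hδE : ∀ i, δ i ≤ E i)
    (hstart : ∀ i, δ i ≤ Φ δ i)
    (hE : (∀ i, 0 < E i ∧ E i ≤ 1) ∧ Φ E = E) :
    (∀ n i, Φ^[n] δ i ≤ Φ^[n + 1] δ i) ∧
    (∀ n i, Φ^[n] δ i ≤ 1) ∧
    ∃ a : Fin m → ℝ,
      Filter.Tendsto (fun n => Φ^[n] δ) Filter.atTop (nhds a) ∧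
      Φ a = a ∧ (∀ i, δ i ≤ a i) ∧
      ((∃! x : Fin m → ℝ, (∀ i, 0 < x i ∧ x i ≤ 1) ∧ Φ x = x) → a = E) := by
  -- sums of nonnegative vectors are nonnegative
  have hsum_nonneg : ∀ (b : Fin m → ℝ), (∀ j, 0 ≤ b j) → ∀ i,
      (0:ℝ) ≤ ∑ j, (dmat i j : ℝ) * b j := by
    intro b hb i
    exact Finset.sum_nonneg fun j _ => mul_nonneg (Nat.cast_nonneg _) (hb j)
  -- monotonicity of Φ on nonnegative vectors
  have hmono : ∀ (b c : Fin m → ℝ), (∀ j, 0 ≤ b j) → (∀ j, b j ≤ c j) → ∀ i,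
      Φ b i ≤ Φ c i := by
    intro b c hb hbc i
    rw [hΦ, hΦ]
    have hsb : (0:ℝ) ≤ ∑ j, (dmat i j : ℝ) * b j := hsum_nonneg b hb i
    have hle : (∑ j, (dmat i j : ℝ) * b j) ≤ ∑ j, (dmat i j : ℝ) * c j :=
      Finset.sum_le_sum fun j _ => mul_le_mul_of_nonneg_left (hbc j) (Nat.cast_nonneg _)
    have h1 : (0:ℝ) < 1 + ∑ j, (dmat i j : ℝ) * b j := by linarith
    have := one_div_le_one_div_of_le h1 (add_le_add (le_refl 1) hle)
    linarith
  -- the iterates dominate δ and are monotone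
  have key : ∀ n, (∀ i, δ i ≤ Φ^[n] δ i) ∧ (∀ i, Φ^[n] δ i ≤ Φ^[n+1] δ i) := by
    intro n
    induction n with
    | zero =>
      constructor
      · intro i; simp
      · intro i; simpa using hstart i
    | succ n ih =>
      have hge : ∀ i, δ i ≤ Φ^[n+1] δ i := fun i => le_trans (ih.1 i) (ih.2 i)
      refine ⟨hge, fun i => ?_⟩
      have h1 : Φ^[n+1] δ = Φ (Φ^[n] δ) := Function.iterate_succ_apply' Φ n δ
      have h2 : Φ^[n+2] δ = Φ (Φ^[n+1] δ) := Function.iterate_succ_apply' Φ (n+1) δ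
      rw [h1, h2]
      exact hmono _ _ (fun j => le_trans (hδ j).le (ih.1 j)) ih.2 i
  have hmono' : ∀ n i, Φ^[n] δ i ≤ Φ^[n+1] δ i := fun n => (key n).2
  have hge : ∀ n i, δ i ≤ Φ^[n] δ i := fun n => (key n).1
  -- bounded above by 1
  have hbd : ∀ n i, Φ^[n] δ i ≤ 1 := by
    intro n i
    cases n with
    | zero => simpa using le_trans (hδE i) (hE.1 i).2
    | succ n =>
      have h1 : Φ^[n+1] δ = Φ (Φ^[n] δ) := Function.iterate_succ_apply' Φ n δ
      rw [h1, hΦ]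
      have hs : (0:ℝ) ≤ ∑ j, (dmat i j : ℝ) * Φ^[n] δ j :=
        hsum_nonneg _ (fun j => le_trans (hδ j).le (hge n j)) i
      have : (0:ℝ) < 1 / (1 + ∑ j, (dmat i j : ℝ) * Φ^[n] δ j) :=
        one_div_pos.mpr (by linarith)
      linarith
  refine ⟨hmono', hbd, ?_⟩
  -- coordinatewise monotone sequences, take sups
  have hmonoseq : ∀ i, Monotone (fun n => Φ^[n] δ i) := fun i =>
    monotone_nat_of_le_succ (fun n => hmono' n i)
  set a : Fin m → ℝ := fun i => ⨆ n, Φ^[n] δ i with ha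
  have hbdd : ∀ i, BddAbove (Set.range fun n => Φ^[n] δ i) := fun i =>
    ⟨1, by rintro x ⟨n, rfl⟩; exact hbd n i⟩
  have htendsto : ∀ i, Filter.Tendsto (fun n => Φ^[n] δ i) Filter.atTop (nhds (a i)) :=
    fun i => tendsto_atTop_ciSup (hmonoseq i) (hbdd i)
  have hta : Filter.Tendsto (fun n => Φ^[n] δ) Filter.atTop (nhds a) :=
    tendsto_pi_nhds.mpr htendsto
  have haδ : ∀ i, δ i ≤ a i := fun i =>
    le_trans (hge 0 i) (le_ciSup (hbdd i) 0)
  have hale : ∀ i, a i ≤ 1 := fun i =>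
    ciSup_le fun n => hbd n i
  -- a is a fixed point
  have hfix : Φ a = a := by
    funext i
    have hS : (0:ℝ) ≤ ∑ j, (dmat i j : ℝ) * a j :=
      hsum_nonneg a (fun j => le_trans (hδ j).le (haδ j)) i
    have hSne : (1:ℝ) + ∑ j, (dmat i j : ℝ) * a j ≠ 0 := by linarith
    have hsumt : Filter.Tendsto (fun n => ∑ j, (dmat i j : ℝ) * Φ^[n] δ j)
        Filter.atTop (nhds (∑ j, (dmat i j : ℝ) * a j)) :=
      tendsto_finset_sum _ (fun j _ => (htendsto j).const_mul _)
    have h1t : Filter.Tendsto (fun n => 1 - 1 / (1 + ∑ j, (dmat i j : ℝ) * Φ^[n] δ j))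
        Filter.atTop (nhds (1 - 1 / (1 + ∑ j, (dmat i j : ℝ) * a j))) := by
      apply Filter.Tendsto.const_sub
      exact Filter.Tendsto.div tendsto_const_nhds (Filter.Tendsto.const_add _ hsumt) hSne
    have heq : (fun n => 1 - 1 / (1 + ∑ j, (dmat i j : ℝ) * Φ^[n] δ j)) =
        fun n => Φ^[n+1] δ i := by
      funext n
      rw [Function.iterate_succ_apply' Φ n δ, hΦ]
    rw [heq] at h1t
    have h2t : Filter.Tendsto (fun n => Φ^[n+1] δ i) Filter.atTop (nhds (a i)) :=
      (htendsto i).comp (Filter.tendsto_add_atTop_nat 1)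
    have := tendsto_nhds_unique h1t h2t
    rw [hΦ]
    exact this
  refine ⟨a, hta, hfix, haδ, ?_⟩
  rintro ⟨x, hx, hxu⟩
  have h1 : a = x := hxu a ⟨fun i => ⟨lt_of_lt_of_le (hδ i) (haδ i), hale i⟩, hfix⟩
  have h2 : E = x := hxu E ⟨hE.1, hE.2⟩
  rw [h1, h2]
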